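/- In the limit ν → ∞ of the '2/3' fake superpotential, the function W(φ;∞) = -((d-1)/(κ²l)) (1-ρ²)^{-3/4}, with ρ = tanh((2/3)√(dκ²/(d-1)) φ), satisfies V(φ) = (1/2)(W'² - (dκ²/(d-1)) W²) for V(φ) = -(d(d-1)/(2κ²l²)) cosh((2/3)√(dκ²/(d-1)) φ), and has expansion W(φ;∞) = -((d-1)/(κ²l))(1 + ψ²/3 + O(ψ⁴)) with ψ = √(dκ²/(d-1)) φ. -/

import Mathlib

open Real Asymptotics

lemma cosh_taylor {u : ℝ} (hu : |u| ≤ 1) :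
    |Real.cosh u - (1 + u ^ 2 / 2)| ≤ |u| ^ 4 * (5 / 96) := by
  have h1 := Real.exp_bound hu (n := 4) (by norm_num)
  have h2 := Real.exp_bound (x := -u) (by rwa [abs_neg]) (n := 4) (by norm_num)
  rw [Finset.sum_range_succ, Finset.sum_range_succ, Finset.sum_range_succ,
    Finset.sum_range_succ, Finset.sum_range_zero] at h1 h2
  rw [abs_neg] at h2
  have hc : Real.cosh u = (Real.exp u + Real.exp (-u)) / 2 := Real.cosh_eq u
  have habs := abs_add_le (Real.exp u - (0 + u ^ 0 / Nat.factorial 0 + u ^ 1 / Nat.factorial 1 +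
      u ^ 2 / Nat.factorial 2 + u ^ 3 / Nat.factorial 3))
    (Real.exp (-u) - (0 + (-u) ^ 0 / Nat.factorial 0 + (-u) ^ 1 / Nat.factorial 1 +
      (-u) ^ 2 / Nat.factorial 2 + (-u) ^ 3 / Nat.factorial 3))
  have key : Real.cosh u - (1 + u ^ 2 / 2) =
      ((Real.exp u - (0 + u ^ 0 / Nat.factorial 0 + u ^ 1 / Nat.factorial 1 +
      u ^ 2 / Nat.factorial 2 + u ^ 3 / Nat.factorial 3)) +
      (Real.exp (-u) - (0 + (-u) ^ 0 / Nat.factorial 0 + (-u) ^ 1 / Nat.factorial 1 +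
      (-u) ^ 2 / Nat.factorial 2 + (-u) ^ 3 / Nat.factorial 3))) / 2 := by
    rw [hc]; simp [Nat.factorial]; ring
  rw [key, abs_div, abs_two]
  calc _ ≤ (|u| ^ 4 * (↑(Nat.succ 4) / (↑(Nat.factorial 4) * 4)) +
        |u| ^ 4 * (↑(Nat.succ 4) / (↑(Nat.factorial 4) * 4))) / 2 := by
        apply div_le_div_of_nonneg_right ?_ (by norm_num)
        · exact le_trans habs (add_le_add h1 h2)
    _ ≤ |u| ^ 4 * (5 / 96) := by norm_num [Nat.factorial]

lemma sq_rpow_half {x : ℝ} (hx : 0 ≤ x) : (x ^ ((1:ℝ)/2)) ^ 2 = x := by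
  rw [← Real.rpow_natCast (x ^ ((1:ℝ)/2)) 2, ← Real.rpow_mul hx]
  norm_num

lemma sq_rpow_3half {x : ℝ} (hx : 0 ≤ x) : (x ^ ((3:ℝ)/2)) ^ 2 = x ^ 3 := by
  rw [← Real.rpow_natCast (x ^ ((3:ℝ)/2)) 2, ← Real.rpow_mul hx]
  norm_num

lemma W_form (y : ℝ) :
    (1 - Real.tanh y ^ 2) ^ (-(3:ℝ)/4) = Real.cosh y ^ ((3:ℝ)/2) := by
  have hcy : 0 < Real.cosh y := Real.cosh_pos y
  have h1 : 1 - Real.tanh y ^ 2 = ((Real.cosh y)⁻¹) ^ 2 := by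
    rw [Real.tanh_eq_sinh_div_cosh]
    field_simp
    exact Real.cosh_sq_sub_sinh_sq y
  rw [h1, ← Real.rpow_natCast ((Real.cosh y)⁻¹) 2, ← Real.rpow_mul (by positivity)]
  rw [Real.inv_rpow hcy.le, ← Real.rpow_neg hcy.le]
  norm_num

lemma rpow_3half_bounds {t : ℝ} (ht : 0 ≤ t) :
    |(1 + t) ^ ((3:ℝ)/2) - (1 + (3/2) * t)| ≤ t ^ 2 / 2 := by
  have h1 : 1 + (3/2) * t ≤ (1 + t) ^ ((3:ℝ)/2) :=
    one_add_mul_self_le_rpow_one_add (by linarith) (by norm_num)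
  have h2 : (1 + t) ^ ((3:ℝ)/2) ≤ 1 + (3/2) * t + t ^ 2 / 2 := by
    have hsplit : (1 + t) ^ ((3:ℝ)/2) = (1 + t) * Real.sqrt (1 + t) := by
      rw [show ((3:ℝ)/2) = 1 + 1/2 by norm_num, Real.rpow_add (by linarith),
        Real.rpow_one, ← Real.sqrt_eq_rpow]
    have hs : Real.sqrt (1 + t) ≤ 1 + t / 2 := by
      have h : (1 : ℝ) + t ≤ (1 + t / 2) ^ 2 := by nlinarith
      calc Real.sqrt (1 + t) ≤ Real.sqrt ((1 + t / 2) ^ 2) := Real.sqrt_le_sqrt h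
        _ = 1 + t / 2 := Real.sqrt_sq (by linarith)
    rw [hsplit]
    nlinarith [Real.sqrt_nonneg (1 + t)]
  rw [abs_sub_le_iff]
  constructor <;> linarith

set_option maxHeartbeats 1600000 in
theorem stmt8 (d κ l : ℝ) (hd : 1 < d) (hκ : 0 < κ) (hl : 0 < l)
    (V W ρ ψ : ℝ → ℝ)
    (hρ : ∀ φ, ρ φ = Real.tanh ((2 / 3) * Real.sqrt (d * κ ^ 2 / (d - 1)) * φ))
    (hψ : ∀ φ, ψ φ = Real.sqrt (d * κ ^ 2 / (d - 1)) * φ)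
    (hV : ∀ φ, V φ = -(d * (d - 1) / (2 * κ ^ 2 * l ^ 2)) *
      Real.cosh ((2 / 3) * Real.sqrt (d * κ ^ 2 / (d - 1)) * φ))
    (hW : ∀ φ, W φ = -((d - 1) / (κ ^ 2 * l)) * (1 - ρ φ ^ 2) ^ (-(3 : ℝ) / 4)) :
    (∀ φ : ℝ, V φ = (1 / 2) * ((deriv W φ) ^ 2 - (d * κ ^ 2 / (d - 1)) * (W φ) ^ 2)) ∧
    (fun φ => W φ - (-((d - 1) / (κ ^ 2 * l)) * (1 + ψ φ ^ 2 / 3)))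
      =O[nhds 0] fun φ => ψ φ ^ 4 := by
  have hd1 : (0:ℝ) < d - 1 := by linarith
  have hX : 0 < d * κ ^ 2 / (d - 1) := div_pos (by positivity) hd1
  obtain ⟨c, hcdef⟩ : ∃ c, c = Real.sqrt (d * κ ^ 2 / (d - 1)) := ⟨_, rfl⟩
  obtain ⟨A, hAdef⟩ : ∃ A, A = (d - 1) / (κ ^ 2 * l) := ⟨_, rfl⟩
  have hc : 0 < c := hcdef ▸ Real.sqrt_pos.2 hX
  have hc2 : c ^ 2 = d * κ ^ 2 / (d - 1) := by rw [hcdef]; exact Real.sq_sqrt hX.le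
  have hA : 0 < A := by rw [hAdef]; positivity
  simp only [← hcdef, ← hAdef] at hρ hψ hV hW ⊢
  -- closed form for W
  have hWc : ∀ φ, W φ = -A * Real.cosh (2 / 3 * c * φ) ^ ((3:ℝ)/2) := by
    intro φ
    rw [hW, hρ, W_form]
  -- derivative of W
  have hder : ∀ φ, HasDerivAt W
      (-A * (Real.sinh (2 / 3 * c * φ) * (2 / 3 * c) * ((3:ℝ)/2) *
        Real.cosh (2 / 3 * c * φ) ^ ((3:ℝ)/2 - 1))) φ := by
    intro φ
    have h0 : HasDerivAt (fun x : ℝ => 2 / 3 * c * x) (2 / 3 * c) φ := by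
      simpa using (hasDerivAt_id φ).const_mul (2 / 3 * c)
    have h1 : HasDerivAt (fun x => Real.cosh (2 / 3 * c * x))
        (Real.sinh (2 / 3 * c * φ) * (2 / 3 * c)) φ := (Real.hasDerivAt_cosh _).comp φ h0
    have h2 := h1.rpow_const (p := (3:ℝ)/2) (Or.inr (by norm_num))
    have h3 := h2.const_mul (-A)
    have h4 : W = fun x => -A * Real.cosh (2 / 3 * c * x) ^ ((3:ℝ)/2) := funext hWc
    rw [h4]
    convert h3 using 1
  constructor
  · intro φ
    have hch : 0 < Real.cosh (2 / 3 * c * φ) := Real.cosh_pos _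
    rw [hV, hWc φ, (hder φ).deriv]
    rw [show ((3:ℝ)/2 - 1) = 1/2 by norm_num]
    have e1 : (Real.cosh (2 / 3 * c * φ) ^ ((1:ℝ)/2)) ^ 2 = Real.cosh (2 / 3 * c * φ) :=
      sq_rpow_half hch.le
    have e2 : (Real.cosh (2 / 3 * c * φ) ^ ((3:ℝ)/2)) ^ 2 = Real.cosh (2 / 3 * c * φ) ^ 3 :=
      sq_rpow_3half hch.le
    have es : Real.sinh (2 / 3 * c * φ) ^ 2 = Real.cosh (2 / 3 * c * φ) ^ 2 - 1 := by
      have := Real.cosh_sq_sub_sinh_sq (2 / 3 * c * φ); linarith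
    simp only [mul_pow]
    rw [e1, e2, es, hc2, hAdef]
    field_simp
    ring
  · rw [Asymptotics.isBigO_iff]
    refine ⟨A, ?_⟩
    filter_upwards [Metric.ball_mem_nhds (0:ℝ) (show (0:ℝ) < 3 / (2 * c) by positivity)]
      with φ hφ
    rw [Metric.mem_ball, Real.dist_eq, sub_zero] at hφ
    rw [hWc φ, hψ φ]
    have hφ' : 2 / 3 * c * |φ| ≤ 1 := by
      calc 2 / 3 * c * |φ| ≤ 2 / 3 * c * (3 / (2 * c)) := by
            apply mul_le_mul_of_nonneg_left hφ.le (by positivity)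
        _ = 1 := by field_simp
    have hcu : c * φ = 3 / 2 * (2 / 3 * c * φ) := by ring
    rw [hcu]
    set u := 2 / 3 * c * φ with hudef
    have hu : |u| ≤ 1 := by
      rw [hudef, abs_mul, abs_of_pos (by positivity : (0:ℝ) < 2 / 3 * c)]
      exact hφ'
    clear_value u
    obtain ⟨hul, hur⟩ := abs_le.1 hu
    have hu2 : u ^ 2 ≤ 1 := by nlinarith
    have habs4 : |u| ^ 4 = u ^ 4 := by
      rw [show (4:ℕ) = 2 * 2 from rfl, pow_mul, pow_mul, sq_abs]
    obtain ⟨t, htdef⟩ : ∃ t, t = Real.cosh u - 1 := ⟨_, rfl⟩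
    have ht0 : 0 ≤ t := by rw [htdef]; have := Real.one_le_cosh u; linarith
    have hE : |t - u ^ 2 / 2| ≤ u ^ 4 * (5 / 96) := by
      have h := cosh_taylor hu
      rw [habs4] at h
      have heq : t - u ^ 2 / 2 = Real.cosh u - (1 + u ^ 2 / 2) := by rw [htdef]; ring
      rw [heq]; exact h
    have hB : |(1 + t) ^ ((3:ℝ)/2) - (1 + 3 / 2 * t)| ≤ t ^ 2 / 2 := rpow_3half_bounds ht0
    have h1t : (1:ℝ) + t = Real.cosh u := by rw [htdef]; ring
    rw [h1t] at hB
    obtain ⟨hE1, hE2⟩ := abs_le.1 hE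
    obtain ⟨hB1, hB2⟩ := abs_le.1 hB
    have hu4 : u ^ 4 ≤ u ^ 2 := by nlinarith [sq_nonneg u]
    have hu40 : (0:ℝ) ≤ u ^ 4 := by positivity
    have ht2 : t ≤ u ^ 2 := by linarith
    have ht4 : t ^ 2 ≤ u ^ 4 := by nlinarith
    have core : |Real.cosh u ^ ((3:ℝ)/2) - (1 + (3 / 2 * u) ^ 2 / 3)| ≤ (3 / 2 * u) ^ 4 := by
      have hg1 : (3 / 2 * u) ^ 2 / 3 = 3 / 4 * u ^ 2 := by ring
      have hg2 : (3 / 2 * u) ^ 4 = 81 / 16 * u ^ 4 := by ring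
      rw [hg1, hg2, abs_sub_le_iff]
      generalize hZ : Real.cosh u ^ ((3:ℝ)/2) = Z at hB1 hB2 ⊢
      constructor <;> linarith
    have hlhs : -A * Real.cosh u ^ ((3:ℝ)/2) - -A * (1 + (3 / 2 * u) ^ 2 / 3) =
        -A * (Real.cosh u ^ ((3:ℝ)/2) - (1 + (3 / 2 * u) ^ 2 / 3)) := by ring
    rw [hlhs, Real.norm_eq_abs, Real.norm_eq_abs, abs_mul, abs_neg, abs_of_pos hA]
    have hrhs : |(3 / 2 * u) ^ 4| = (3 / 2 * u) ^ 4 := abs_of_nonneg (by positivity)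
    rw [hrhs]
    exact mul_le_mul_of_nonneg_left core hA.le
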